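/- Let ζ be a complex number and let t₁ ≤ t₂ ≤ ... ≤ t_k and t'₁ ≤ t'₂ ≤ ... ≤ t'_k be 2k real numbers in [0,1). Then the determinant of the k×k matrix with (i,j) entry ζ^{1{t'_j < t_i}} equals (1-ζ)^{k-1} if t₁ ≤ t'₁ < t₂ ≤ t'₂ < ... < t_k ≤ t'_k, equals (-1)^{k-1} ζ (1-ζ)^{k-1} if t'₁ < t₁ ≤ t'₂ < t₂ ≤ ... ≤ t'_k < t_k, and equals 0 otherwise. -/

import Mathlib

open Finset

lemma detA : ∀ (n : ℕ) (ζ : ℂ),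
    (Matrix.of fun i j : Fin (n+1) => if (j:ℕ) < (i:ℕ) then ζ else 1).det = (1-ζ)^n := by
  intro n
  induction n with
  | zero =>
    intro ζ
    rw [Matrix.det_fin_one]
    simp
  | succ n ih =>
    intro ζ
    set A : Matrix (Fin (n+2)) (Fin (n+2)) ℂ :=
      Matrix.of fun i j : Fin (n+2) => if (j:ℕ) < (i:ℕ) then ζ else 1 with hA
    have h01 : (0 : Fin (n+2)) ≠ 1 := by simp [Fin.ext_iff]
    rw [← Matrix.det_updateRow_add_smul_self A h01 (-1)]
    rw [Matrix.det_succ_row_zero]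
    rw [Matrix.updateRow_self]
    have hrow : ∀ j : Fin (n+2), (A 0 + (-1 : ℂ) • A 1) j = if j = 0 then 1 - ζ else 0 := by
      intro j
      simp only [Pi.add_apply, Pi.smul_apply, smul_eq_mul, hA, Matrix.of_apply]
      rcases eq_or_ne j 0 with rfl | hj
      · norm_num
        ring
      · have h1 : 0 < (j:ℕ) := Nat.pos_of_ne_zero (fun h => hj (Fin.ext h))
        have h2 : ¬ ((j:ℕ) < ((0:Fin (n+2)):ℕ)) := by simp
        have h3 : ¬ ((j:ℕ) < ((1:Fin (n+2)):ℕ)) := by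
          simp only [Fin.val_one]; omega
        rw [if_neg h2, if_neg h3, if_neg hj]
        ring
    rw [Finset.sum_eq_single 0]
    · rw [hrow 0]
      simp only [if_pos trivial, Fin.val_zero, pow_zero, one_mul, eq_self_iff_true]
      have hsub : (A.updateRow 0 (A 0 + (-1 : ℂ) • A 1)).submatrix Fin.succ (Fin.succAbove 0) =
          Matrix.of fun i j : Fin (n+1) => if (j:ℕ) < (i:ℕ) then ζ else 1 := by
        ext i j
        rw [Matrix.submatrix_apply, Fin.zero_succAbove,
          Matrix.updateRow_ne (Fin.succ_ne_zero i), hA]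
        simp
      rw [hsub, ih ζ]
      ring
    · intro j _ hj
      rw [hrow j, if_neg hj]
      ring
    · intro h
      exact absurd (Finset.mem_univ _) h


lemma detB : ∀ (n : ℕ) (ζ : ℂ),
    (Matrix.of fun i j : Fin (n+1) => if (j:ℕ) ≤ (i:ℕ) then ζ else 1).det
      = (-1)^n * ζ * (1-ζ)^n := by
  intro n
  induction n with
  | zero =>
    intro ζ
    rw [Matrix.det_fin_one]
    simp
  | succ n ih =>
    intro ζ
    set B : Matrix (Fin (n+2)) (Fin (n+2)) ℂ :=
      Matrix.of fun i j : Fin (n+2) => if (j:ℕ) ≤ (i:ℕ) then ζ else 1 with hB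
    have h01 : (0 : Fin (n+2)) ≠ 1 := by simp [Fin.ext_iff]
    rw [← Matrix.det_updateRow_add_smul_self B h01 (-1)]
    rw [Matrix.det_succ_row_zero]
    rw [Matrix.updateRow_self]
    have hrow : ∀ j : Fin (n+2), (B 0 + (-1 : ℂ) • B 1) j = if j = 1 then 1 - ζ else 0 := by
      intro j
      simp only [Pi.add_apply, Pi.smul_apply, smul_eq_mul, hB, Matrix.of_apply]
      rcases eq_or_ne j 1 with rfl | hj
      · have e1 : ((1 : Fin (n+2)):ℕ) = 1 := rfl
        rw [if_neg (by simp : ¬ ((1:Fin (n+2)):ℕ) ≤ ((0:Fin (n+2)):ℕ)), if_pos (le_refl _),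
          if_pos rfl]
        ring
      · rcases eq_or_ne j 0 with rfl | hj0
        · rw [if_pos (le_refl _), if_pos (by simp : ((0:Fin (n+2)):ℕ) ≤ ((1:Fin (n+2)):ℕ)),
            if_neg hj]
          ring
        · have h1 : 2 ≤ (j:ℕ) := by
            have a0 : (j:ℕ) ≠ 0 := fun h => hj0 (Fin.ext h)
            have a1 : (j:ℕ) ≠ 1 := by simpa [Fin.ext_iff] using hj
            omega
          rw [if_neg (by simp only [Fin.val_zero]; omega : ¬ (j:ℕ) ≤ ((0:Fin (n+2)):ℕ)),
            if_neg (by simp only [Fin.val_one]; omega : ¬ (j:ℕ) ≤ ((1:Fin (n+2)):ℕ)),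
            if_neg hj]
          ring
    rw [Finset.sum_eq_single 1]
    · rw [hrow 1]
      simp only [if_pos rfl]
      have hsub : (B.updateRow 0 (B 0 + (-1 : ℂ) • B 1)).submatrix Fin.succ (Fin.succAbove 1) =
          Matrix.of fun i j : Fin (n+1) => if (j:ℕ) ≤ (i:ℕ) then ζ else 1 := by
        ext i j
        rw [Matrix.submatrix_apply, Matrix.updateRow_ne (Fin.succ_ne_zero i), hB]
        simp only [Matrix.of_apply]
        have hval : (((1 : Fin (n+2)).succAbove j : Fin (n+2)) : ℕ)
            = if (j:ℕ) < 1 then (j:ℕ) else (j:ℕ)+1 := by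
          rw [Fin.succAbove]
          split_ifs with h h2 h3
          · rfl
          · exact absurd (by simpa [Fin.lt_def] using h) h2
          · exact absurd (by simpa [Fin.lt_def] using h3) h
          · rfl
        rw [hval, Fin.val_succ]
        by_cases hj : (j:ℕ) < 1
        · rw [if_pos hj]
          have : (j:ℕ) = 0 := by omega
          rw [if_pos (by omega), if_pos (by omega)]
        · rw [if_neg hj]
          by_cases hle : (j:ℕ) ≤ (i:ℕ)
          · rw [if_pos (by omega), if_pos hle]
          · rw [if_neg (by omega), if_neg hle]
      rw [hsub, ih ζ]
      have : ((1 : Fin (n+2)) : ℕ) = 1 := rfl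
      rw [this, if_pos trivial]
      ring
    · intro j _ hj
      rw [hrow j, if_neg hj]
      ring
    · intro h
      exact absurd (Finset.mem_univ _) h

theorem bead_interlacing_det (k : ℕ) (hk : 0 < k) (ζ : ℂ) (t t' : Fin k → ℝ)
    (ht : Monotone t) (ht' : Monotone t')
    (ht01 : ∀ i, t i ∈ Set.Ico (0 : ℝ) 1) (ht'01 : ∀ i, t' i ∈ Set.Ico (0 : ℝ) 1) :
    (((∀ i, t i ≤ t' i) ∧ ∀ i j : Fin k, (i : ℕ) + 1 = (j : ℕ) → t' i < t j) →
      Matrix.det (Matrix.of fun i j : Fin k => if t' j < t i then ζ else 1)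
        = (1 - ζ) ^ (k - 1)) ∧
    (((∀ i, t' i < t i) ∧ ∀ i j : Fin k, (i : ℕ) + 1 = (j : ℕ) → t i ≤ t' j) →
      Matrix.det (Matrix.of fun i j : Fin k => if t' j < t i then ζ else 1)
        = (-1) ^ (k - 1) * ζ * (1 - ζ) ^ (k - 1)) ∧
    ((¬ ((∀ i, t i ≤ t' i) ∧ ∀ i j : Fin k, (i : ℕ) + 1 = (j : ℕ) → t' i < t j) ∧
      ¬ ((∀ i, t' i < t i) ∧ ∀ i j : Fin k, (i : ℕ) + 1 = (j : ℕ) → t i ≤ t' j)) →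
      Matrix.det (Matrix.of fun i j : Fin k => if t' j < t i then ζ else 1) = 0) := by
  obtain ⟨n, rfl⟩ : ∃ n, k = n + 1 := ⟨k - 1, (Nat.succ_pred_eq_of_pos hk).symm⟩
  refine ⟨?_, ?_, ?_⟩
  · -- Part 1
    rintro ⟨h1, h2⟩
    have hM : (Matrix.of fun i j : Fin (n+1) => if t' j < t i then ζ else 1)
        = Matrix.of fun i j : Fin (n+1) => if (j:ℕ) < (i:ℕ) then ζ else 1 := by
      ext i j
      simp only [Matrix.of_apply]
      by_cases h : (j:ℕ) < (i:ℕ)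
      · have hj1 : (j:ℕ) + 1 < n + 1 := lt_of_le_of_lt h i.isLt
        have hlt : t' j < t ⟨(j:ℕ)+1, hj1⟩ := h2 j ⟨(j:ℕ)+1, hj1⟩ rfl
        have hle : t ⟨(j:ℕ)+1, hj1⟩ ≤ t i := ht (by rw [Fin.le_def]; exact h)
        rw [if_pos (lt_of_lt_of_le hlt hle), if_pos h]
      · have : ¬ t' j < t i := not_lt.mpr (le_trans (h1 i) (ht' (by rw [Fin.le_def]; omega)))
        rw [if_neg this, if_neg h]
    rw [hM, detA n ζ]
    simp
  · -- Part 2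
    rintro ⟨h1, h2⟩
    have hM : (Matrix.of fun i j : Fin (n+1) => if t' j < t i then ζ else 1)
        = Matrix.of fun i j : Fin (n+1) => if (j:ℕ) ≤ (i:ℕ) then ζ else 1 := by
      ext i j
      simp only [Matrix.of_apply]
      by_cases h : (j:ℕ) ≤ (i:ℕ)
      · have : t' j ≤ t' i := ht' (by rw [Fin.le_def]; exact h)
        rw [if_pos (lt_of_le_of_lt this (h1 i)), if_pos h]
      · have hi1 : (i:ℕ) + 1 < n + 1 := lt_of_le_of_lt (by omega) j.isLt
        have hle : t i ≤ t' ⟨(i:ℕ)+1, hi1⟩ := h2 i ⟨(i:ℕ)+1, hi1⟩ rfl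
        have hle2 : t' ⟨(i:ℕ)+1, hi1⟩ ≤ t' j := ht' (by rw [Fin.le_def]; simp; omega)
        rw [if_neg (not_lt.mpr (le_trans hle hle2)), if_neg h]
    rw [hM, detB n ζ]
    simp
  · -- Part 3
    rintro ⟨hn1, hn2⟩
    set M := Matrix.of fun i j : Fin (n+1) => if t' j < t i then ζ else 1 with hMdef
    set c : Fin (n+1) → ℕ :=
      fun j => (Finset.univ.filter fun i : Fin (n+1) => t i ≤ t' j).card with hcdef
    have hmem : ∀ (i j : Fin (n+1)), t i ≤ t' j ↔ (i:ℕ) < c j := by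
      intro i j
      constructor
      · intro h
        have hsub : Finset.Iic i ⊆ Finset.univ.filter (fun i' => t i' ≤ t' j) := by
          intro i' hi'
          simp only [Finset.mem_Iic] at hi'
          simp only [Finset.mem_filter, Finset.mem_univ, true_and]
          exact le_trans (ht hi') h
        have hcard := Finset.card_le_card hsub
        rw [Fin.card_Iic] at hcard
        have hcard2 : (i:ℕ) + 1 ≤ c j := hcard
        omega
      · intro h
        by_contra hcon
        have hsub : Finset.univ.filter (fun i' => t i' ≤ t' j) ⊆ Finset.Iio i := by
          intro i' hi'
          simp only [Finset.mem_filter, Finset.mem_univ, true_and] at hi'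
          simp only [Finset.mem_Iio]
          by_contra hge
          exact hcon (le_trans (ht (not_lt.mp hge)) hi')
        have hcard := Finset.card_le_card hsub
        rw [Fin.card_Iio] at hcard
        have hcard2 : c j ≤ (i:ℕ) := hcard
        omega
    have hMc : ∀ (i j : Fin (n+1)), M i j = if (i:ℕ) < c j then 1 else ζ := by
      intro i j
      rw [hMdef]
      simp only [Matrix.of_apply]
      by_cases h : (i:ℕ) < c j
      · rw [if_neg (not_lt.mpr ((hmem i j).mpr h)), if_pos h]
      · rw [if_pos (not_le.mp fun hle => h ((hmem i j).mp hle)), if_neg h]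
    by_cases hinj : Function.Injective c
    · -- injective case
      have hmono : Monotone c := by
        intro j j' hjj'
        apply Finset.card_le_card
        intro i hi
        simp only [Finset.mem_filter, Finset.mem_univ, true_and] at hi ⊢
        exact le_trans hi (ht' hjj')
      have hsm : StrictMono c := hmono.strictMono_of_injective hinj
      have hadd : ∀ (d : ℕ) (a b : Fin (n+1)), (a:ℕ) + d = (b:ℕ) → c a + d ≤ c b := by
        intro d
        induction d with
        | zero =>
          intro a b h
          have : a = b := Fin.ext (by omega)
          subst this
          omega
        | succ d ihd =>
          intro a b h
          have hb' : (a:ℕ) + d < n + 1 := by have := b.isLt; omega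
          have h1 := ihd a ⟨(a:ℕ)+d, hb'⟩ rfl
          have h2 : (⟨(a:ℕ)+d, hb'⟩ : Fin (n+1)) < b := by rw [Fin.lt_def]; simp; omega
          have h3 := hsm h2
          omega
      have hle : ∀ j, c j ≤ n + 1 := by
        intro j
        calc c j ≤ Finset.univ.card := Finset.card_filter_le _ _
        _ = n + 1 := by rw [Finset.card_univ, Fintype.card_fin]
      have hlow : ∀ j : Fin (n+1), (j:ℕ) ≤ c j := by
        intro j
        have := hadd (j:ℕ) 0 j (by simp)
        omega
      have hhigh : ∀ j : Fin (n+1), c j ≤ (j:ℕ) + 1 := by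
        intro j
        have h1 := hadd (n - (j:ℕ)) j (Fin.last n) (by simp [Fin.last]; omega)
        have h2 := hle (Fin.last n)
        have := j.isLt
        omega
      have hex1 : ∃ m : Fin (n+1), c m ≠ (m:ℕ) + 1 := by
        by_contra hcon
        push_neg at hcon
        apply hn1
        constructor
        · intro i
          rw [hmem i i, hcon i]
          omega
        · intro i j hij
          have : ¬ t j ≤ t' i := by
            rw [hmem j i, hcon i]
            omega
          exact not_le.mp this
      have hex2 : ∃ m : Fin (n+1), c m ≠ (m:ℕ) := by
        by_contra hcon
        push_neg at hcon
        apply hn2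
        constructor
        · intro i
          have : ¬ t i ≤ t' i := by rw [hmem i i, hcon i]; omega
          exact not_le.mp this
        · intro i j hij
          rw [hmem i j, hcon j]
          omega
      obtain ⟨m, hm⟩ := hex1
      obtain ⟨m', hm'⟩ := hex2
      have hcm : c m = (m:ℕ) := by have := hlow m; have := hhigh m; omega
      have hcm' : c m' = (m':ℕ) + 1 := by have := hlow m'; have := hhigh m'; omega
      have hc0 : c 0 = 0 := by
        have := hadd (m:ℕ) 0 m (by simp)
        omega
      have hclast : c (Fin.last n) = n + 1 := by
        have h1 := hadd (n - (m':ℕ)) m' (Fin.last n) (by simp [Fin.last]; omega)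
        have h2 := hle (Fin.last n)
        have := m'.isLt
        omega
      have hne : (0 : Fin (n+1)) ≠ Fin.last n := by
        intro h
        have : c (0 : Fin (n+1)) = c (Fin.last n) := by rw [h]
        omega
      rw [← Matrix.det_updateCol_add_smul_self M hne (-ζ)]
      apply Matrix.det_eq_zero_of_column_eq_zero 0
      intro i
      rw [Matrix.updateCol_self]
      rw [hMc i 0, hMc i (Fin.last n), hc0, hclast]
      rw [if_neg (by omega), if_pos (by exact i.isLt)]
      simp
    · -- non-injective case
      rw [Function.not_injective_iff] at hinj
      obtain ⟨a, b, hab, hne⟩ := hinj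
      apply Matrix.det_zero_of_column_eq hne
      intro i
      rw [hMc i a, hMc i b, hab]
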